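/- arXiv:1906.09411 — 2 statements merged into one kernel-verified Lean document; each statement's English description precedes it below -/
import Mathlib

section
/- Let d, m ≥ 1, let b : ℝ^d → ℝ^d and σ : ℝ^d → ℝ^{d×m} be continuous, and let V : ℝ^d → ℝ be twice continuously differentiable. Assume: (a) V has compact level sets; (b) the function x ↦ |σ(x)ᵀ∇V(x)| has compact level sets; (c) for every θ ∈ (0,1), −LV − (θ/2)|σᵀ∇V|² ∼ |σᵀ∇V|². Then for every θ ∈ (0,1) there exists ε₀ ∈ (0, θ/2) such that for every ε ∈ (0, ε₀], setting W = e^{θV}, 𝒲 = e^{εV} and Ψ = −(LW)/W, one has: (i) Ψ = θ(−LV − (θ/2)|σᵀ∇V|²) and Ψ has compact level sets; (ii) Ψ ∼ |σᵀ∇V|²; (iii) there exists C₁ > 0 with 𝒲² ≤ C₁ W pointwise; (iv) Ψ ∼ −(L𝒲)/𝒲; (v) there exists C₂ ∈ ℝ with −2(L𝒲)/𝒲 ≤ Ψ + C₂ pointwise. -/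
open Real Matrix MeasureTheory Filter Topology
open scoped BigOperators ENNReal

/-- Partial derivative in direction `i`. -/
noncomputable def pd {d : ℕ} (i : Fin d) (φ : EuclideanSpace ℝ (Fin d) → ℝ)
    (x : EuclideanSpace ℝ (Fin d)) : ℝ :=
  fderiv ℝ φ x (EuclideanSpace.single i 1)

/-- Generator of the diffusion: `Lφ = b·∇φ + S : ∇²φ` with `S = σσᵀ/2`. -/
noncomputable def gen {d m : ℕ}
    (b : EuclideanSpace ℝ (Fin d) → EuclideanSpace ℝ (Fin d))
    (σ : EuclideanSpace ℝ (Fin d) → Matrix (Fin d) (Fin m) ℝ)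
    (φ : EuclideanSpace ℝ (Fin d) → ℝ) (x : EuclideanSpace ℝ (Fin d)) : ℝ :=
  (∑ i, b x i * pd i φ x) +
    ∑ i, ∑ j, ((σ x * (σ x)ᵀ) i j / 2) * pd j (pd i φ) x

/-- `|σᵀ∇V|²`. -/
noncomputable def sigmaGradSq {d m : ℕ}
    (σ : EuclideanSpace ℝ (Fin d) → Matrix (Fin d) (Fin m) ℝ)
    (V : EuclideanSpace ℝ (Fin d) → ℝ) (x : EuclideanSpace ℝ (Fin d)) : ℝ :=
  ∑ k : Fin m, (∑ i, σ x i k * pd i V x) ^ 2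

/-- `f` has compact level sets. -/
def HasCompactLevelSets {α : Type*} [TopologicalSpace α] (f : α → ℝ) : Prop :=
  ∀ M : ℝ, IsCompact {x | f x ≤ M}

/-- `f ∼ g` : there exist `c, c' > 0` and `R, R'` with `c' g − R' ≤ f ≤ c g + R`. -/
def EquivGrowth {α : Type*} (f g : α → ℝ) : Prop :=
  ∃ c c' R R' : ℝ, 0 < c ∧ 0 < c' ∧ ∀ x, c' * g x - R' ≤ f x ∧ f x ≤ c * g x + R


section Aux

variable {d m : ℕ} {V : EuclideanSpace ℝ (Fin d) → ℝ}
  {b : EuclideanSpace ℝ (Fin d) → EuclideanSpace ℝ (Fin d)}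
  {σ : EuclideanSpace ℝ (Fin d) → Matrix (Fin d) (Fin m) ℝ}

lemma pdV_contDiff (hV : ContDiff ℝ 2 V) (i : Fin d) : ContDiff ℝ 1 (pd i V) := by
  have h := hV.fderiv_right (m := 1) (by norm_num)
  exact h.clm_apply contDiff_const

lemma pd_pd_cont (hV : ContDiff ℝ 2 V) (i j : Fin d) :
    Continuous (pd j (pd i V)) := by
  have h := (pdV_contDiff hV i).fderiv_right (m := 0) (by norm_num)
  exact contDiff_zero.mp (h.clm_apply contDiff_const)

lemma hasFDerivAt_expV (hV : ContDiff ℝ 2 V) (t : ℝ) (x) :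
    HasFDerivAt (fun y => Real.exp (t * V y)) ((t * Real.exp (t * V x)) • fderiv ℝ V x) x := by
  have hVd : HasFDerivAt V (fderiv ℝ V x) x :=
    ((hV.differentiable (by norm_num)) x).hasFDerivAt
  have h2 := (hVd.const_mul t).exp
  rw [show t * Real.exp (t * V x) = Real.exp (t * V x) * t from mul_comm _ _, ← smul_smul]
  exact h2

lemma pd_exp (hV : ContDiff ℝ 2 V) (t : ℝ) (i : Fin d) (x) :
    pd i (fun y => Real.exp (t * V y)) x = t * Real.exp (t * V x) * pd i V x := by
  unfold pd
  rw [(hasFDerivAt_expV hV t x).fderiv]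
  simp [mul_assoc]

lemma pd_pd_exp (hV : ContDiff ℝ 2 V) (t : ℝ) (i j : Fin d) (x) :
    pd j (pd i (fun y => Real.exp (t * V y))) x
      = t ^ 2 * Real.exp (t * V x) * pd j V x * pd i V x
        + t * Real.exp (t * V x) * pd j (pd i V) x := by
  have hfun : pd i (fun y => Real.exp (t * V y))
      = fun x => t * Real.exp (t * V x) * pd i V x := by
    funext y; exact pd_exp hV t i y
  rw [hfun]
  show fderiv ℝ _ x (EuclideanSpace.single j 1) = _
  have h1 : HasFDerivAt (fun y => t * Real.exp (t * V y))
      (t • ((t * Real.exp (t * V x)) • fderiv ℝ V x)) x :=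
    (hasFDerivAt_expV hV t x).const_mul t
  have h2 : HasFDerivAt (pd i V) (fderiv ℝ (pd i V) x) x :=
    (((pdV_contDiff hV i).differentiable one_ne_zero) x).hasFDerivAt
  rw [HasFDerivAt.fderiv (f := fun y => t * Real.exp (t * V y) * pd i V y) (h1.mul h2)]
  simp only [ContinuousLinearMap.add_apply, ContinuousLinearMap.smul_apply, smul_eq_mul]
  show _ = _ * (fderiv ℝ V x (EuclideanSpace.single j 1)) * _
      + _ * (fderiv ℝ (pd i V) x (EuclideanSpace.single j 1))
  ring

lemma sgs_eq (x) : sigmaGradSq σ V x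
    = ∑ i, ∑ j, (σ x * (σ x)ᵀ) i j * (pd j V x * pd i V x) := by
  unfold sigmaGradSq
  simp only [Matrix.mul_apply, Matrix.transpose_apply, sq, Finset.sum_mul, Finset.mul_sum]
  rw [Finset.sum_comm]
  refine Finset.sum_congr rfl fun i _ => ?_
  rw [Finset.sum_comm]
  refine Finset.sum_congr rfl fun j _ => Finset.sum_congr rfl fun k _ => by ring

lemma gen_exp (hV : ContDiff ℝ 2 V) (t : ℝ) (x) :
    gen b σ (fun y => Real.exp (t * V y)) x
      = Real.exp (t * V x) * (t * gen b σ V x + t ^ 2 / 2 * sigmaGradSq σ V x) := by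
  unfold gen
  simp only [pd_exp hV t, pd_pd_exp hV t]
  rw [sgs_eq]
  simp only [Finset.mul_sum, Finset.sum_add_distrib, mul_add]
  rw [add_assoc, add_comm (∑ i, ∑ j, _ * (t ^ 2 * Real.exp (t * V x) * pd j V x * pd i V x))]
  congr 1
  · exact Finset.sum_congr rfl fun i _ => by ring
  congr 1
  · exact Finset.sum_congr rfl fun i _ => Finset.sum_congr rfl fun j _ => by ring
  · exact Finset.sum_congr rfl fun i _ => Finset.sum_congr rfl fun j _ => by ring

lemma gen_cont (hb : Continuous b) (hσ : Continuous σ) (hV : ContDiff ℝ 2 V) :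
    Continuous (gen b σ V) := by
  unfold gen
  apply Continuous.add
  · exact continuous_finset_sum _ fun i _ =>
      (by fun_prop : Continuous fun x => (b x).ofLp i).mul (pdV_contDiff hV i).continuous
  · refine continuous_finset_sum _ fun i _ => continuous_finset_sum _ fun j _ => ?_
    refine Continuous.mul (Continuous.div_const ?_ 2) (pd_pd_cont hV i j)
    simp only [Matrix.mul_apply, Matrix.transpose_apply]
    exact continuous_finset_sum _ fun k _ =>
      (((continuous_apply k).comp ((continuous_apply i).comp hσ)).mul
        ((continuous_apply k).comp ((continuous_apply j).comp hσ)))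

lemma sgs_cont (hσ : Continuous σ) (hV : ContDiff ℝ 2 V) :
    Continuous (sigmaGradSq σ V) := by
  unfold sigmaGradSq
  refine continuous_finset_sum _ fun k _ => Continuous.pow ?_ 2
  exact continuous_finset_sum _ fun i _ =>
    ((continuous_apply k).comp ((continuous_apply i).comp hσ)).mul
      (pdV_contDiff hV i).continuous

lemma sgs_nonneg (x) : 0 ≤ sigmaGradSq σ V x :=
  Finset.sum_nonneg fun k _ => sq_nonneg _

lemma V_bddBelow (hVc : Continuous V) (hVlev : HasCompactLevelSets V) :
    ∃ K : ℝ, ∀ x, K ≤ V x := by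
  by_cases hne : {x | V x ≤ 0}.Nonempty
  · obtain ⟨x₀, hx₀, hmin⟩ := (hVlev 0).exists_isMinOn hne hVc.continuousOn
    refine ⟨V x₀, fun x => ?_⟩
    by_cases hx : V x ≤ 0
    · exact hmin hx
    · exact le_trans hx₀ (le_of_lt (not_le.mp hx))
  · exact ⟨0, fun x => le_of_lt (not_le.mp (fun h => hne ⟨x, h⟩))⟩

lemma equivGrowth_smul {α : Type*} {f g : α → ℝ} {t : ℝ} (ht : 0 < t)
    (h : EquivGrowth f g) : EquivGrowth (fun x => t * f x) g := by
  obtain ⟨c, c', R, R', hc, hc', hb⟩ := h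
  refine ⟨t * c, t * c', t * R, t * R', by positivity, by positivity, fun x => ?_⟩
  show t * c' * g x - t * R' ≤ t * f x ∧ t * f x ≤ t * c * g x + t * R
  exact ⟨by nlinarith [(hb x).1], by nlinarith [(hb x).2]⟩

lemma equivGrowth_trans {α : Type*} {f g h : α → ℝ}
    (h1 : EquivGrowth f g) (h2 : EquivGrowth h g) : EquivGrowth f h := by
  obtain ⟨c, c', R, R', hc, hc', hb1⟩ := h1
  obtain ⟨a, a', S, S', ha, ha', hb2⟩ := h2
  refine ⟨c / a', c' / a, c / a' * S' + R, c' / a * S + R',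
    by positivity, by positivity, fun x => ?_⟩
  obtain ⟨l1, u1⟩ := hb1 x
  obtain ⟨l2, u2⟩ := hb2 x
  constructor
  · have hg : c' / a * h x - c' / a * S ≤ c' * g x := by
      rw [div_mul_eq_mul_div, div_mul_eq_mul_div, div_sub_div_same, div_le_iff₀ ha]
      nlinarith [mul_le_mul_of_nonneg_left u2 hc'.le]
    linarith
  · have hg2 : c * g x ≤ c / a' * h x + c / a' * S' := by
      rw [div_mul_eq_mul_div, div_mul_eq_mul_div, ← add_div, le_div_iff₀ ha']
      nlinarith [mul_le_mul_of_nonneg_left l2 hc.le]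
    linarith

end Aux

/-- Proposition `prop:nonlin` of Ferré–Stoltz. Under a nonlinear Lyapunov
condition on `V`, the Witten–Lyapunov assumptions hold for `W = e^{θV}` and `𝒲 = e^{εV}`. -/
theorem stmt0 (d m : ℕ) (hd : 1 ≤ d) (hm : 1 ≤ m)
    (b : EuclideanSpace ℝ (Fin d) → EuclideanSpace ℝ (Fin d))
    (σ : EuclideanSpace ℝ (Fin d) → Matrix (Fin d) (Fin m) ℝ)
    (hb : Continuous b) (hσ : Continuous σ)
    (V : EuclideanSpace ℝ (Fin d) → ℝ) (hV : ContDiff ℝ 2 V)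
    (hVlev : HasCompactLevelSets V)
    (hσVlev : HasCompactLevelSets (fun x => Real.sqrt (sigmaGradSq σ V x)))
    (hequiv : ∀ θ : ℝ, θ ∈ Set.Ioo (0:ℝ) 1 →
      EquivGrowth (fun x => -(gen b σ V x) - θ / 2 * sigmaGradSq σ V x)
        (fun x => sigmaGradSq σ V x)) :
    ∀ θ : ℝ, θ ∈ Set.Ioo (0:ℝ) 1 → ∃ ε₀ : ℝ, 0 < ε₀ ∧ ε₀ < θ / 2 ∧
      ∀ ε : ℝ, ε ∈ Set.Ioc (0:ℝ) ε₀ →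
        -- (i) identity for Ψ and compact level sets of Ψ
        (∀ x, -(gen b σ (fun y => Real.exp (θ * V y)) x) / Real.exp (θ * V x)
            = θ * (-(gen b σ V x) - θ / 2 * sigmaGradSq σ V x)) ∧
        HasCompactLevelSets
          (fun x => -(gen b σ (fun y => Real.exp (θ * V y)) x) / Real.exp (θ * V x)) ∧
        -- (ii) Ψ ∼ |σᵀ∇V|²
        EquivGrowth
          (fun x => -(gen b σ (fun y => Real.exp (θ * V y)) x) / Real.exp (θ * V x))
          (fun x => sigmaGradSq σ V x) ∧
        -- (iii) 𝒲² ≤ C₁ W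
        (∃ C₁ : ℝ, 0 < C₁ ∧
          ∀ x, (Real.exp (ε * V x)) ^ 2 ≤ C₁ * Real.exp (θ * V x)) ∧
        -- (iv) Ψ ∼ −(L𝒲)/𝒲
        EquivGrowth
          (fun x => -(gen b σ (fun y => Real.exp (θ * V y)) x) / Real.exp (θ * V x))
          (fun x => -(gen b σ (fun y => Real.exp (ε * V y)) x) / Real.exp (ε * V x)) ∧
        -- (v) −2(L𝒲)/𝒲 ≤ Ψ + C₂
        (∃ C₂ : ℝ, ∀ x,
          -2 * gen b σ (fun y => Real.exp (ε * V y)) x / Real.exp (ε * V x)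
            ≤ -(gen b σ (fun y => Real.exp (θ * V y)) x) / Real.exp (θ * V x) + C₂) := by
  
  intro θ hθ
  obtain ⟨hθ0, hθ1⟩ := hθ
  have hPsi : ∀ t : ℝ, ∀ x, -(gen b σ (fun y => Real.exp (t * V y)) x) / Real.exp (t * V x)
      = t * (-(gen b σ V x) - t / 2 * sigmaGradSq σ V x) := by
    intro t x
    have he : Real.exp (t * V x) ≠ 0 := (Real.exp_pos _).ne'
    rw [gen_exp hV t x]
    field_simp
    ring
  have hEθ := hequiv θ ⟨hθ0, hθ1⟩
  obtain ⟨c, c', R, R', hc, hc', hbd⟩ := hEθ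
  obtain ⟨K, hK⟩ := V_bddBelow hV.continuous hVlev
  refine ⟨min (θ / 4) (c' / 2), by positivity, ?_, ?_⟩
  · calc min (θ / 4) (c' / 2) ≤ θ / 4 := min_le_left _ _
      _ < θ / 2 := by linarith
  intro ε hε
  obtain ⟨hε0, hε1⟩ := hε
  have hεθ4 : ε ≤ θ / 4 := le_trans hε1 (min_le_left _ _)
  have hεc : ε ≤ c' / 2 := le_trans hε1 (min_le_right _ _)
  have hε1' : ε < 1 := by linarith
  have hEε := hequiv ε ⟨hε0, hε1'⟩
  have hfθ : (fun x => -(gen b σ (fun y => Real.exp (θ * V y)) x) / Real.exp (θ * V x))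
      = fun x => θ * (-(gen b σ V x) - θ / 2 * sigmaGradSq σ V x) := funext (hPsi θ)
  have hfε : (fun x => -(gen b σ (fun y => Real.exp (ε * V y)) x) / Real.exp (ε * V x))
      = fun x => ε * (-(gen b σ V x) - ε / 2 * sigmaGradSq σ V x) := funext (hPsi ε)
  refine ⟨hPsi θ, ?_, ?_, ?_, ?_, ?_⟩
  · -- compact level sets of Ψ
    rw [hfθ]
    intro M
    apply IsCompact.of_isClosed_subset
      (hσVlev (Real.sqrt (max ((M / θ + R') / c') 0)))
    · exact isClosed_le (continuous_const.mul
        (((gen_cont hb hσ hV).neg).sub (continuous_const.mul (sgs_cont hσ hV))))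
        continuous_const
    · intro x hx
      simp only [Set.mem_setOf_eq] at hx ⊢
      have h := (hbd x).1
      simp only [] at h
      have h2 : c' * sigmaGradSq σ V x - R' ≤ M / θ := by
        rw [le_div_iff₀ hθ0]
        nlinarith
      have h3 : sigmaGradSq σ V x ≤ (M / θ + R') / c' := by
        rw [le_div_iff₀ hc']
        linarith
      exact Real.sqrt_le_sqrt (h3.trans (le_max_left _ _))
  · -- (ii)
    rw [hfθ]
    exact equivGrowth_smul hθ0 ⟨c, c', R, R', hc, hc', hbd⟩
  · -- (iii)
    refine ⟨Real.exp ((2 * ε - θ) * K), Real.exp_pos _, fun x => ?_⟩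
    have heq : Real.exp (ε * V x) ^ 2
        = Real.exp ((2 * ε - θ) * V x) * Real.exp (θ * V x) := by
      rw [sq, ← Real.exp_add, ← Real.exp_add]
      ring_nf
    rw [heq]
    apply mul_le_mul_of_nonneg_right _ (Real.exp_pos _).le
    apply Real.exp_le_exp.2
    exact mul_le_mul_of_nonpos_left (hK x) (by linarith)
  · -- (iv)
    rw [hfθ, hfε]
    exact equivGrowth_trans (equivGrowth_smul hθ0 ⟨c, c', R, R', hc, hc', hbd⟩)
      (equivGrowth_smul hε0 hEε)
  · -- (v)
    refine ⟨(θ - 2 * ε) * R', fun x => ?_⟩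
    have hL : -2 * gen b σ (fun y => Real.exp (ε * V y)) x / Real.exp (ε * V x)
        = 2 * (-(gen b σ (fun y => Real.exp (ε * V y)) x) / Real.exp (ε * V x)) := by
      ring
    rw [hL, hPsi ε x, hPsi θ x]
    have h := (hbd x).1
    simp only [] at h
    have hG := sgs_nonneg (σ := σ) (V := V) x
    nlinarith [mul_le_mul_of_nonneg_left h (by linarith : (0:ℝ) ≤ θ - 2 * ε),
      mul_nonneg (mul_nonneg hc'.le (by linarith : (0:ℝ) ≤ θ / 2 - 2 * ε)) hG,
      mul_nonneg (mul_nonneg hθ0.le (by linarith : (0:ℝ) ≤ c' / 2 - ε)) hG,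
      mul_nonneg (mul_nonneg hε0.le hε0.le) hG]
end

section
/- Let V : ℝ^d → ℝ be continuously differentiable and suppose there exist constants c_V > 0 and C_V ∈ ℝ such that q·∇V(q) ≥ c_V |q|² − C_V for all q ∈ ℝ^d. Then for every γ > 0 and every θ ∈ (0,1) there exist ε > 0 and constants a, b, C > 0 such that, setting H(q,p) = V(q) + |p|²/2 and W(q,p) = exp(θ H(q,p) + ε q·p), the function W satisfies −(L_γ W)(q,p)/W(q,p) ≥ a|q|² + b|p|² − C for all (q,p) ∈ ℝ^d × ℝ^d. -/
open Real MeasureTheory Filter Topology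
open scoped BigOperators ENNReal

/-- Partial derivative in the `i`-th position direction of a function of `(q,p)`. -/
noncomputable def pdq {d : ℕ} (i : Fin d)
    (φ : EuclideanSpace ℝ (Fin d) × EuclideanSpace ℝ (Fin d) → ℝ)
    (x : EuclideanSpace ℝ (Fin d) × EuclideanSpace ℝ (Fin d)) : ℝ :=
  fderiv ℝ φ x (EuclideanSpace.single i 1, 0)

/-- Partial derivative in the `i`-th momentum direction of a function of `(q,p)`. -/
noncomputable def pdp {d : ℕ} (i : Fin d)
    (φ : EuclideanSpace ℝ (Fin d) × EuclideanSpace ℝ (Fin d) → ℝ)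
    (x : EuclideanSpace ℝ (Fin d) × EuclideanSpace ℝ (Fin d)) : ℝ :=
  fderiv ℝ φ x (0, EuclideanSpace.single i 1)

/-- Generator of the underdamped Langevin dynamics:
`L_γ φ = p·∇_q φ − ∇V(q)·∇_p φ + γ(−p·∇_p φ + Δ_p φ)`. -/
noncomputable def Lgamma {d : ℕ} (γ : ℝ) (V : EuclideanSpace ℝ (Fin d) → ℝ)
    (φ : EuclideanSpace ℝ (Fin d) × EuclideanSpace ℝ (Fin d) → ℝ)
    (x : EuclideanSpace ℝ (Fin d) × EuclideanSpace ℝ (Fin d)) : ℝ :=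
  (∑ i, x.2 i * pdq i φ x) - (∑ i, pd i V x.1 * pdp i φ x)
    + γ * ((-∑ i, x.2 i * pdp i φ x) + ∑ i, pdp i (pdp i φ) x)

namespace Stmt3Aux

abbrev E (d : ℕ) := EuclideanSpace ℝ (Fin d)

noncomputable def cq (d : ℕ) (i : Fin d) : E d × E d →L[ℝ] ℝ :=
  (EuclideanSpace.proj i).comp (ContinuousLinearMap.fst ℝ (E d) (E d))
noncomputable def cp (d : ℕ) (i : Fin d) : E d × E d →L[ℝ] ℝ :=
  (EuclideanSpace.proj i).comp (ContinuousLinearMap.snd ℝ (E d) (E d))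

lemma norm_sq_eq {d : ℕ} (y : E d) : ‖y‖^2 = ∑ i, y i * y i := by
  rw [EuclideanSpace.norm_eq, Real.sq_sqrt (by positivity)]
  simp [Real.norm_eq_abs, sq_abs, sq]

noncomputable def Wf {d : ℕ} (V : E d → ℝ) (θ ε : ℝ) : E d × E d → ℝ :=
  fun y => Real.exp (θ * (V y.1 + ‖y.2‖ ^ 2 / 2) + ε * ∑ i, y.1 i * y.2 i)

noncomputable def DW {d : ℕ} (V : E d → ℝ) (θ ε : ℝ) (x : E d × E d) : E d × E d →L[ℝ] ℝ :=
  Wf V θ ε x •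
    (θ • ((fderiv ℝ V x.1).comp (ContinuousLinearMap.fst ℝ (E d) (E d))
        + (∑ i, (x.2 i) • cp d i))
      + ε • ∑ i, (x.1 i • cp d i + x.2 i • cq d i))

lemma hasW {d : ℕ} (V : E d → ℝ) (hV : ContDiff ℝ 1 V) (θ ε : ℝ) (x : E d × E d) :
    HasFDerivAt (Wf V θ ε) (DW V θ ε x) x := by
  have hq : ∀ i, HasFDerivAt (fun y : E d × E d => y.1 i) (cq d i) x := fun i => (cq d i).hasFDerivAt
  have hp : ∀ i, HasFDerivAt (fun y : E d × E d => y.2 i) (cp d i) x := fun i => (cp d i).hasFDerivAt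
  have hV1 : HasFDerivAt (fun y : E d × E d => V y.1)
      ((fderiv ℝ V x.1).comp (ContinuousLinearMap.fst ℝ (E d) (E d))) x :=
    ((hV.differentiable one_ne_zero x.1).hasFDerivAt).comp x hasFDerivAt_fst
  have hns : HasFDerivAt (fun y : E d × E d => ‖y.2‖ ^ 2 / 2)
      (∑ i, (x.2 i) • cp d i) x := by
    have h1 : HasFDerivAt (fun y : E d × E d => (1/2 : ℝ) * ∑ i, y.2 i * y.2 i)
        ((1/2 : ℝ) • ∑ i, (x.2 i • cp d i + x.2 i • cp d i)) x :=
      (HasFDerivAt.fun_sum fun i _ => (hp i).mul (hp i)).const_mul (1/2)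
    have h2 : (1/2 : ℝ) • ∑ i, (x.2 i • cp d i + x.2 i • cp d i) = ∑ i, (x.2 i) • cp d i := by
      refine ContinuousLinearMap.ext fun v => ?_
      simp only [ContinuousLinearMap.smul_apply, ContinuousLinearMap.sum_apply,
        ContinuousLinearMap.add_apply, smul_eq_mul, ← Finset.sum_add_distrib, Finset.mul_sum]
      exact Finset.sum_congr rfl fun i _ => by ring
    rw [h2] at h1
    exact h1.congr_of_eventuallyEq (Filter.Eventually.of_forall fun y => by
      show ‖y.2‖ ^ 2 / 2 = _
      rw [norm_sq_eq]; ring)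
  have hsum2 : HasFDerivAt (fun y : E d × E d => ∑ i, y.1 i * y.2 i)
      (∑ i, (x.1 i • cp d i + x.2 i • cq d i)) x :=
    HasFDerivAt.fun_sum fun i _ => (hq i).mul (hp i)
  exact (((hV1.add hns).const_mul θ).add (hsum2.const_mul ε)).exp

lemma DW_apply {d : ℕ} (V : E d → ℝ) (θ ε : ℝ) (x v : E d × E d) :
    DW V θ ε x v = Wf V θ ε x *
      (θ * (fderiv ℝ V x.1 v.1 + ∑ i, x.2 i * v.2 i)
        + ε * ∑ i, (x.1 i * v.2 i + x.2 i * v.1 i)) := by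
  simp only [DW, cq, cp, ContinuousLinearMap.smul_apply, ContinuousLinearMap.add_apply,
    ContinuousLinearMap.sum_apply, ContinuousLinearMap.comp_apply,
    ContinuousLinearMap.coe_fst', ContinuousLinearMap.coe_snd',
    PiLp.proj_apply, smul_eq_mul, Finset.mul_sum]

lemma pdq_W {d : ℕ} (V : E d → ℝ) (hV : ContDiff ℝ 1 V) (θ ε : ℝ) (i : Fin d) (x : E d × E d) :
    pdq i (Wf V θ ε) x = Wf V θ ε x * (θ * pd i V x.1 + ε * x.2 i) := by
  rw [pdq, (hasW V hV θ ε x).fderiv, DW_apply]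
  simp [pd, EuclideanSpace.single_apply, Finset.mul_sum, mul_ite]

lemma pdp_W {d : ℕ} (V : E d → ℝ) (hV : ContDiff ℝ 1 V) (θ ε : ℝ) (i : Fin d) (x : E d × E d) :
    pdp i (Wf V θ ε) x = Wf V θ ε x * (θ * x.2 i + ε * x.1 i) := by
  rw [pdp, (hasW V hV θ ε x).fderiv, DW_apply]
  simp [EuclideanSpace.single_apply, Finset.mul_sum, mul_ite]

lemma pdp2_W {d : ℕ} (V : E d → ℝ) (hV : ContDiff ℝ 1 V) (θ ε : ℝ) (i : Fin d) (x : E d × E d) :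
    pdp i (pdp i (Wf V θ ε)) x
      = Wf V θ ε x * (θ + (θ * x.2 i + ε * x.1 i) ^ 2) := by
  have hfun : pdp i (Wf V θ ε) = fun y => Wf V θ ε y * (θ * y.2 i + ε * y.1 i) :=
    funext fun y => pdp_W V hV θ ε i y
  rw [hfun]
  have hlin : HasFDerivAt (fun y : E d × E d => θ * y.2 i + ε * y.1 i)
      (θ • cp d i + ε • cq d i) x :=
    (((cp d i).hasFDerivAt).const_mul θ).add (((cq d i).hasFDerivAt).const_mul ε)
  have hprod := (hasW V hV θ ε x).mul hlin
  rw [pdp, (show HasFDerivAt (fun y : E d × E d => Wf V θ ε y * (θ * y.2 i + ε * y.1 i)) _ x from hprod).fderiv]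
  simp only [ContinuousLinearMap.add_apply, ContinuousLinearMap.smul_apply, smul_eq_mul,
    DW_apply, cq, cp, ContinuousLinearMap.comp_apply, ContinuousLinearMap.coe_fst',
    ContinuousLinearMap.coe_snd', PiLp.proj_apply]
  simp [EuclideanSpace.single_apply, Finset.mul_sum, mul_ite]
  ring

lemma Lgamma_W {d : ℕ} (γ : ℝ) (V : E d → ℝ) (hV : ContDiff ℝ 1 V) (θ ε : ℝ)
    (x : E d × E d) :
    Lgamma γ V (Wf V θ ε) x = Wf V θ ε x *
      (ε * (∑ i, x.2 i * x.2 i) - ε * (∑ i, x.1 i * pd i V x.1)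
        + γ * (θ * d + (θ ^ 2 - θ) * (∑ i, x.2 i * x.2 i)
          + (2 * θ * ε - ε) * (∑ i, x.1 i * x.2 i) + ε ^ 2 * (∑ i, x.1 i * x.1 i))) := by
  set w := Wf V θ ε x with hw
  have e1 : ∀ i : Fin d, x.2 i * pdq i (Wf V θ ε) x
      = w * θ * (x.2 i * pd i V x.1) + w * ε * (x.2 i * x.2 i) := fun i => by
    rw [pdq_W V hV]; ring
  have e2 : ∀ i : Fin d, pd i V x.1 * pdp i (Wf V θ ε) x
      = w * θ * (x.2 i * pd i V x.1) + w * ε * (x.1 i * pd i V x.1) := fun i => by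
    rw [pdp_W V hV]; ring
  have e3 : ∀ i : Fin d, x.2 i * pdp i (Wf V θ ε) x
      = w * θ * (x.2 i * x.2 i) + w * ε * (x.1 i * x.2 i) := fun i => by
    rw [pdp_W V hV]; ring
  have e4 : ∀ i : Fin d, pdp i (pdp i (Wf V θ ε)) x
      = w * θ + w * θ ^ 2 * (x.2 i * x.2 i) + w * (2 * θ * ε) * (x.1 i * x.2 i)
        + w * ε ^ 2 * (x.1 i * x.1 i) := fun i => by
    rw [pdp2_W V hV]; ring
  rw [Lgamma]
  simp only [e1, e2, e3, e4, Finset.sum_add_distrib, ← Finset.mul_sum, Finset.sum_const,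
    Finset.card_univ, Fintype.card_fin, nsmul_eq_mul]
  ring

lemma crossbound (γ cV u Q P S : ℝ) (hγ : 0 < γ) (hcV : 0 < cV)
    (hQ : 0 ≤ Q) (hP : 0 ≤ P) (hSS : S ^ 2 ≤ Q * P) (hu : u ^ 2 ≤ 1) :
    cV * γ * u * S ≤ cV ^ 2 * Q / 4 + γ ^ 2 * P := by
  have h2 : u ^ 2 * S ^ 2 ≤ Q * P :=
    le_trans (mul_le_of_le_one_left (sq_nonneg S) hu) hSS
  have h3 := mul_le_mul_of_nonneg_left h2 (by positivity : (0:ℝ) ≤ cV ^ 2 * γ ^ 2)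
  have h1 : (cV * γ * u * S) ^ 2 ≤ (cV ^ 2 * Q / 4 + γ ^ 2 * P) ^ 2 := by
    nlinarith [sq_nonneg (cV ^ 2 * Q / 4 - γ ^ 2 * P), h3]
  have hA : (0:ℝ) ≤ cV ^ 2 * Q / 4 + γ ^ 2 * P := by positivity
  nlinarith [h1, hA]

lemma keyineq (γ θ cV CV ε Q P S G Dd : ℝ) (hγ : 0 < γ) (hθ1 : 0 < θ) (hθ2 : θ < 1)
    (hcV : 0 < cV) (hQ : 0 ≤ Q) (hP : 0 ≤ P) (hSS : S ^ 2 ≤ Q * P)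
    (hG : cV * Q - CV ≤ G) (hD : 0 ≤ Dd)
    (hε1 : 0 < ε) (hε2 : γ * ε ≤ cV / 4) (hε3 : ε * (cV + γ ^ 2) ≤ γ * θ * (1 - θ) * cV / 2) :
    (ε * cV / 2) * Q + (γ * θ * (1 - θ) / 2) * P - (ε * |CV| + γ * θ * Dd + 1)
      ≤ ε * G - ε * P + γ * θ * (1 - θ) * P - γ * ε * (2 * θ - 1) * S - γ * ε ^ 2 * Q
        - γ * θ * Dd := by
  have hCV : ε * CV ≤ ε * |CV| := mul_le_mul_of_nonneg_left (le_abs_self CV) hε1.le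
  have hG2 : ε * cV * Q - ε * CV ≤ ε * G := by nlinarith [mul_le_mul_of_nonneg_left hG hε1.le]
  have hu : (2 * θ - 1) ^ 2 ≤ 1 := by nlinarith
  have hcross : cV * γ * (2 * θ - 1) * S ≤ cV ^ 2 * Q / 4 + γ ^ 2 * P :=
    crossbound γ cV (2 * θ - 1) Q P S hγ hcV hQ hP hSS hu
  have hcross2 : γ * ε * (2 * θ - 1) * S ≤ ε * cV * Q / 4 + ε * γ ^ 2 / cV * P := by
    have h := mul_le_mul_of_nonneg_left hcross (le_of_lt (div_pos hε1 hcV))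
    have l1 : ε / cV * (cV * γ * (2 * θ - 1) * S) = γ * ε * (2 * θ - 1) * S := by
      field_simp
    have l2 : ε / cV * (cV ^ 2 * Q / 4 + γ ^ 2 * P) = ε * cV * Q / 4 + ε * γ ^ 2 / cV * P := by
      field_simp
    rw [l1, l2] at h; exact h
  have hq : γ * ε ^ 2 * Q ≤ ε * cV * Q / 4 := by
    nlinarith [mul_le_mul_of_nonneg_right hε2 (mul_nonneg hε1.le hQ)]
  have hp : ε * P + ε * γ ^ 2 / cV * P ≤ γ * θ * (1 - θ) * P / 2 := by
    rw [← sub_nonneg]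
    have key : γ * θ * (1 - θ) * P / 2 - (ε * P + ε * γ ^ 2 / cV * P)
        = (γ * θ * (1 - θ) * cV / 2 - ε * (cV + γ ^ 2)) * P / cV := by field_simp
    rw [key]
    exact div_nonneg (mul_nonneg (by linarith) hP) hcV.le
  linarith [hG2, hcross2, hq, hp, hCV]

end Stmt3Aux

open Stmt3Aux in
/-- Lemma `lem:lyapunovlangevin`. Under `q·∇V(q) ≥ c_V|q|² − C_V`, for every
`γ > 0` and `θ ∈ (0,1)` there are `ε > 0` and `a, b, C > 0` such that
`W(q,p) = exp(θH(q,p) + ε q·p)` satisfies `−(L_γ W)/W ≥ a|q|² + b|p|² − C`. -/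
theorem stmt3 (d : ℕ) (V : EuclideanSpace ℝ (Fin d) → ℝ) (hV : ContDiff ℝ 1 V)
    (cV : ℝ) (hcV : 0 < cV) (CV : ℝ)
    (hconf : ∀ q : EuclideanSpace ℝ (Fin d), cV * ‖q‖ ^ 2 - CV ≤ ∑ i, q i * pd i V q) :
    ∀ γ : ℝ, 0 < γ → ∀ θ : ℝ, θ ∈ Set.Ioo (0:ℝ) 1 →
      ∃ ε : ℝ, 0 < ε ∧ ∃ a : ℝ, 0 < a ∧ ∃ b : ℝ, 0 < b ∧ ∃ C : ℝ, 0 < C ∧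
        ∀ x : EuclideanSpace ℝ (Fin d) × EuclideanSpace ℝ (Fin d),
          a * ‖x.1‖ ^ 2 + b * ‖x.2‖ ^ 2 - C ≤
            -(Lgamma γ V
                (fun y => Real.exp (θ * (V y.1 + ‖y.2‖ ^ 2 / 2) + ε * ∑ i, y.1 i * y.2 i)) x)
              / Real.exp (θ * (V x.1 + ‖x.2‖ ^ 2 / 2) + ε * ∑ i, x.1 i * x.2 i) := by
  intro γ hγ θ hθ
  obtain ⟨hθ1, hθ2⟩ := hθ
  set ε : ℝ := min (cV / (4 * γ)) (γ * θ * (1 - θ) * cV / (2 * (cV + γ ^ 2))) with hεdef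
  have hε1 : 0 < ε := by
    apply lt_min
    · positivity
    · have h1 : 0 < γ * θ * (1 - θ) * cV := by
        have : 0 < 1 - θ := by linarith
        positivity
      have h2 : 0 < 2 * (cV + γ ^ 2) := by positivity
      positivity
  have hε2 : γ * ε ≤ cV / 4 := by
    have := min_le_left (cV / (4 * γ)) (γ * θ * (1 - θ) * cV / (2 * (cV + γ ^ 2)))
    rw [← hεdef] at this
    calc γ * ε ≤ γ * (cV / (4 * γ)) := mul_le_mul_of_nonneg_left this hγ.le
      _ = cV / 4 := by field_simp
  have hε3 : ε * (cV + γ ^ 2) ≤ γ * θ * (1 - θ) * cV / 2 := by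
    have h := min_le_right (cV / (4 * γ)) (γ * θ * (1 - θ) * cV / (2 * (cV + γ ^ 2)))
    rw [← hεdef] at h
    have hpos : (0:ℝ) < cV + γ ^ 2 := by positivity
    calc ε * (cV + γ ^ 2) ≤ γ * θ * (1 - θ) * cV / (2 * (cV + γ ^ 2)) * (cV + γ ^ 2) :=
          mul_le_mul_of_nonneg_right h hpos.le
      _ = γ * θ * (1 - θ) * cV / 2 := by field_simp
  refine ⟨ε, hε1, ε * cV / 2, by positivity, γ * θ * (1 - θ) / 2, ?_, ε * |CV| + γ * θ * d + 1, ?_, ?_⟩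
  · have : 0 < 1 - θ := by linarith
    positivity
  · positivity
  intro x
  show _ ≤ -(Lgamma γ V (Wf V θ ε) x) / Wf V θ ε x
  have hWne : Wf V θ ε x ≠ 0 := ne_of_gt (Real.exp_pos _)
  rw [Lgamma_W γ V hV θ ε x, neg_div, mul_div_cancel_left₀ _ hWne]
  have hQ : (∑ i, x.1 i * x.1 i) = ‖x.1‖ ^ 2 := (norm_sq_eq x.1).symm
  have hP : (∑ i, x.2 i * x.2 i) = ‖x.2‖ ^ 2 := (norm_sq_eq x.2).symm
  rw [hQ, hP]
  have hSS : (∑ i, x.1 i * x.2 i) ^ 2 ≤ ‖x.1‖ ^ 2 * ‖x.2‖ ^ 2 := by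
    have h1 : |(inner ℝ x.1 x.2 : ℝ)| ≤ ‖x.1‖ * ‖x.2‖ := abs_real_inner_le_norm x.1 x.2
    have h2 : (inner ℝ x.1 x.2 : ℝ) = ∑ i, x.1 i * x.2 i := by
      rw [PiLp.inner_apply]; simp [RCLike.inner_apply, conj_trivial, mul_comm]
    rw [h2] at h1
    nlinarith [abs_nonneg (∑ i, x.1 i * x.2 i), le_abs_self (∑ i, x.1 i * x.2 i),
      neg_abs_le (∑ i, x.1 i * x.2 i)]
  have hkey := keyineq γ θ cV CV ε (‖x.1‖ ^ 2) (‖x.2‖ ^ 2) (∑ i, x.1 i * x.2 i)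
    (∑ i, x.1 i * pd i V x.1) d hγ hθ1 hθ2 hcV (by positivity) (by positivity) hSS
    (hconf x.1) (Nat.cast_nonneg d) hε1 hε2 hε3
  calc (ε * cV / 2) * ‖x.1‖ ^ 2 + (γ * θ * (1 - θ) / 2) * ‖x.2‖ ^ 2
        - (ε * |CV| + γ * θ * d + 1)
      ≤ ε * (∑ i, x.1 i * pd i V x.1) - ε * ‖x.2‖ ^ 2 + γ * θ * (1 - θ) * ‖x.2‖ ^ 2
        - γ * ε * (2 * θ - 1) * (∑ i, x.1 i * x.2 i) - γ * ε ^ 2 * ‖x.1‖ ^ 2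
        - γ * θ * d := hkey
    _ = -(ε * ‖x.2‖ ^ 2 - ε * (∑ i, x.1 i * pd i V x.1)
        + γ * (θ * d + (θ ^ 2 - θ) * ‖x.2‖ ^ 2
          + (2 * θ * ε - ε) * (∑ i, x.1 i * x.2 i) + ε ^ 2 * ‖x.1‖ ^ 2)) := by ring
end
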